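/- For 0 < H < 1/2 and all 0 ≤ s ≤ t, letting β_H = 2 - 2^{2H-1}, one has (t-s)^{2H} ≤ -2^{2H-1}(t^{2H} + s^{2H}) + (t+s)^{2H} + (t-s)^{2H} ≤ β_H (t-s)^{2H}. -/

import Mathlib

open Real Set

private lemma convexOn_rpow_nonpos {q : ℝ} (hq : q ≤ 0) :
    ConvexOn ℝ (Set.Ioi (0 : ℝ)) fun x : ℝ ↦ x ^ q := by
  apply convexOn_of_hasDerivWithinAt2_nonneg (convex_Ioi 0)
    (f' := fun x => q * x ^ (q - 1)) (f'' := fun x => q * ((q - 1) * x ^ (q - 1 - 1)))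
  · intro x hx
    exact (Real.continuousAt_rpow_const x q (Or.inl (ne_of_gt hx))).continuousWithinAt
  · intro x hx
    rw [interior_Ioi] at hx
    exact (Real.hasDerivAt_rpow_const (Or.inl (ne_of_gt hx))).hasDerivWithinAt
  · intro x hx
    rw [interior_Ioi] at hx
    exact ((Real.hasDerivAt_rpow_const (p := q - 1)
      (Or.inl (ne_of_gt hx))).const_mul q).hasDerivWithinAt
  · intro x hx
    rw [interior_Ioi] at hx
    have h1 : (0 : ℝ) ≤ x ^ (q - 1 - 1) := Real.rpow_nonneg (le_of_lt hx) _
    have h2 : (0 : ℝ) ≤ q * (q - 1) := by nlinarith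
    calc (0:ℝ) ≤ q * (q - 1) * x ^ (q - 1 - 1) := mul_nonneg h2 h1
      _ = q * ((q - 1) * x ^ (q - 1 - 1)) := by ring

private lemma rpow_pair_ineq {q : ℝ} (hq : q ≤ 0) {a b c d : ℝ} (ha : 0 < a)
    (hab : a ≤ b) (hbd : b ≤ d) (hac : a ≤ c) (hcd : c ≤ d) (hsum : a + d = b + c) :
    b ^ q + c ^ q ≤ a ^ q + d ^ q := by
  rcases eq_or_lt_of_le (hab.trans hbd) with h | had
  · have hb : b = a := le_antisymm (h ▸ hbd) hab
    have hc : c = a := le_antisymm (h ▸ hcd) hac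
    rw [hb, hc, ← h]
  · have hda : 0 < d - a := by linarith
    set lam : ℝ := (d - b) / (d - a) with hlam
    have h0 : 0 ≤ lam := div_nonneg (by linarith) hda.le
    have h1 : lam ≤ 1 := (div_le_one hda).mpr (by linarith)
    have hmul : lam * (d - a) = d - b := div_mul_cancel₀ _ hda.ne'
    have hbmem : lam * a + (1 - lam) * d = b := by linear_combination (-1 : ℝ) * hmul
    have hcmem : (1 - lam) * a + lam * d = c := by linear_combination hmul + hsum
    have hconv := convexOn_rpow_nonpos hq
    have ha' : a ∈ Set.Ioi (0 : ℝ) := ha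
    have hd' : d ∈ Set.Ioi (0 : ℝ) := lt_of_lt_of_le ha (by linarith)
    have hfb : b ^ q ≤ lam * a ^ q + (1 - lam) * d ^ q := by
      have h := hconv.2 ha' hd' h0 (show (0:ℝ) ≤ 1 - lam by linarith)
        (show lam + (1 - lam) = 1 by ring)
      simp only [smul_eq_mul] at h
      rwa [hbmem] at h
    have hfc : c ^ q ≤ (1 - lam) * a ^ q + lam * d ^ q := by
      have h := hconv.2 ha' hd' (show (0:ℝ) ≤ 1 - lam by linarith) h0
        (show (1 - lam) + lam = 1 by ring)
      simp only [smul_eq_mul] at h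
      rwa [hcmem] at h
    have haq : 0 ≤ a ^ q := Real.rpow_nonneg ha.le _
    have hdq : 0 ≤ d ^ q := Real.rpow_nonneg (by linarith : (0:ℝ) ≤ d) _
    nlinarith

private lemma rpow_midpoint {p : ℝ} (hp0 : 0 < p) (hp1 : p ≤ 1) {x y : ℝ}
    (hx : 0 ≤ x) (hy : 0 ≤ y) :
    2 ^ (p - 1) * (x ^ p + y ^ p) ≤ (x + y) ^ p := by
  have hconc := Real.concaveOn_rpow hp0.le hp1
  have h := hconc.2 (Set.mem_Ici.mpr hx) (Set.mem_Ici.mpr hy)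
    (by norm_num : (0:ℝ) ≤ 1/2) (by norm_num : (0:ℝ) ≤ 1/2) (by norm_num)
  simp only [smul_eq_mul] at h
  rw [show (1/2 : ℝ) * x + 1/2 * y = (x + y) * (1/2 : ℝ) by ring,
    Real.mul_rpow (by linarith) (by norm_num)] at h
  have h2 : ((1:ℝ)/2) ^ p = 2 ^ (-p) := by
    rw [Real.rpow_neg (by norm_num), one_div, Real.inv_rpow (by norm_num)]
  rw [h2] at h
  have hprod : (2:ℝ) ^ (p - 1) * 2 ^ (-p) = 1/2 := by
    rw [← Real.rpow_add two_pos, show p - 1 + -p = (-1 : ℝ) by ring, Real.rpow_neg_one]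
    norm_num
  have hpos : (0:ℝ) < 2 ^ (p - 1) := Real.rpow_pos_of_pos two_pos _
  have key := mul_le_mul_of_nonneg_left h hpos.le
  have e : 2 ^ (p-1) * ((x+y) ^ p * 2 ^ (-p)) = (x+y) ^ p / 2 := by
    rw [show 2 ^ (p-1) * ((x+y) ^ p * 2 ^ (-p)) = 2 ^ (p-1) * 2 ^ (-p) * (x+y) ^ p by ring,
      hprod]
    ring
  rw [e] at key
  have e2 : 2 ^ (p-1) * (1/2 * x ^ p + 1/2 * y ^ p) = 2 ^ (p-1) * (x ^ p + y ^ p) / 2 := by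
    ring
  rw [e2] at key
  linarith

private lemma key_upper {p : ℝ} (hp0 : 0 < p) (hp1 : p < 1) {s t : ℝ}
    (hs : 0 ≤ s) (hst : s ≤ t) :
    (t + s) ^ p ≤ 2 ^ (p - 1) * (t ^ p + s ^ p) + (1 - 2 ^ (p - 1)) * (t - s) ^ p := by
  set c : ℝ := 2 ^ (p - 1) with hc
  set G : ℝ → ℝ := fun x => c * (x ^ p + s ^ p) - (x + s) ^ p + (1 - c) * (x - s) ^ p with hG
  have h2p : (2:ℝ) ^ (p - 1) * 2 ^ (1:ℝ) = 2 ^ p := by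
    rw [← Real.rpow_add two_pos]; norm_num
  rw [Real.rpow_one] at h2p
  have hmono : MonotoneOn G (Set.Ici s) := by
    apply monotoneOn_of_hasDerivWithinAt_nonneg (convex_Ici s)
      (f' := fun x => p * ((2*x) ^ (p-1) - (x+s) ^ (p-1) + ((x-s) ^ (p-1) - (2*x-2*s) ^ (p-1))))
    · have c1 : Continuous fun x : ℝ => x ^ p := Real.continuous_rpow_const hp0.le
      exact (((continuous_const.mul (c1.add continuous_const)).sub
        (c1.comp (continuous_id.add continuous_const))).add
        (continuous_const.mul (c1.comp (continuous_id.sub continuous_const)))).continuousOn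
    · intro x hx
      rw [interior_Ici] at hx
      have hxs : s < x := hx
      have hx0 : 0 < x := lt_of_le_of_lt hs hxs
      have d1 : HasDerivAt (fun y : ℝ => y ^ p) (p * x ^ (p-1)) x :=
        Real.hasDerivAt_rpow_const (Or.inl hx0.ne')
      have i2 : HasDerivAt (fun y : ℝ => y + s) 1 x := (hasDerivAt_id x).add_const s
      have d2 : HasDerivAt (fun y : ℝ => (y + s) ^ p) (p * (x+s) ^ (p-1) * 1) x := by
        have := (Real.hasDerivAt_rpow_const (x := x + s) (p := p)
          (Or.inl (by positivity : x + s ≠ 0))).comp x i2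
        exact this
      have i3 : HasDerivAt (fun y : ℝ => y - s) 1 x := (hasDerivAt_id x).sub_const s
      have d3 : HasDerivAt (fun y : ℝ => (y - s) ^ p) (p * (x-s) ^ (p-1) * 1) x := by
        have := (Real.hasDerivAt_rpow_const (x := x - s) (p := p)
          (Or.inl (ne_of_gt (by linarith : (0:ℝ) < x - s)))).comp x i3
        exact this
      have dG : HasDerivAt G
          (c * (p * x ^ (p-1)) - p * (x+s) ^ (p-1) * 1 + (1 - c) * (p * (x-s) ^ (p-1) * 1)) x :=
        (((d1.add_const (s ^ p)).const_mul c).sub d2).add (d3.const_mul (1 - c))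
      have e1 : (2*x) ^ (p-1) = c * x ^ (p-1) := by
        rw [hc, Real.mul_rpow (by norm_num) hx0.le]
      have e2 : (2*x - 2*s) ^ (p-1) = c * (x - s) ^ (p-1) := by
        rw [show 2*x - 2*s = 2 * (x - s) by ring, hc,
          Real.mul_rpow (by norm_num) (by linarith : (0:ℝ) ≤ x - s)]
      have : (c * (p * x ^ (p-1)) - p * (x+s) ^ (p-1) * 1 + (1 - c) * (p * (x-s) ^ (p-1) * 1))
          = p * ((2*x) ^ (p-1) - (x+s) ^ (p-1) + ((x-s) ^ (p-1) - (2*x-2*s) ^ (p-1))) := by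
        rw [e1, e2]; ring
      rw [this] at dG
      exact dG.hasDerivWithinAt
    · intro x hx
      rw [interior_Ici] at hx
      have hxs : s < x := hx
      have hx0 : 0 < x := lt_of_le_of_lt hs hxs
      have hpair := rpow_pair_ineq (q := p - 1) (by linarith)
        (show (0:ℝ) < x - s by linarith)
        (show x - s ≤ x + s by linarith) (show x + s ≤ 2*x by linarith)
        (show x - s ≤ 2*x - 2*s by linarith) (show 2*x - 2*s ≤ 2*x by linarith)
        (by ring)
      have := mul_le_mul_of_nonneg_left (by linarith [hpair] :
        (0:ℝ) ≤ (2*x) ^ (p-1) - (x+s) ^ (p-1) + ((x-s) ^ (p-1) - (2*x-2*s) ^ (p-1))) hp0.le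
      linarith [this]
  have h0 : G s = 0 := by
    simp only [hG]
    rw [sub_self, Real.zero_rpow (ne_of_gt hp0),
      show s + s = 2 * s by ring, Real.mul_rpow (by norm_num) hs, ← h2p]
    ring
  have hGt := hmono (Set.self_mem_Ici) (Set.mem_Ici.mpr hst) hst
  rw [h0] at hGt
  simp only [hG] at hGt
  linarith

theorem subfbm_increment_variance_bounds_low (H : ℝ) (hH : 0 < H ∧ H < 1 / 2)
    (s t : ℝ) (hs : 0 ≤ s) (hst : s ≤ t) :
    (t - s) ^ (2 * H) ≤
        -(2 ^ (2 * H - 1)) * (t ^ (2 * H) + s ^ (2 * H))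
          + (t + s) ^ (2 * H) + (t - s) ^ (2 * H) ∧
      -(2 ^ (2 * H - 1)) * (t ^ (2 * H) + s ^ (2 * H))
          + (t + s) ^ (2 * H) + (t - s) ^ (2 * H) ≤
        (2 - 2 ^ (2 * H - 1)) * (t - s) ^ (2 * H) := by
  obtain ⟨hH0, hH1⟩ := hH
  have hp0 : 0 < 2 * H := by linarith
  have hp1 : 2 * H < 1 := by linarith
  have ht : 0 ≤ t := hs.trans hst
  have hmid := rpow_midpoint hp0 hp1.le ht hs
  have hup := key_upper hp0 hp1 hs hst
  constructor
  · linarith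
  · linarith
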